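/- For pairwise distinct primitive types p, q, r, the sequent r, q, p → ((p^⋈·q^⋈)·r^⋈)^⋈ has no derivation in L^⋈ that avoids the rule (cut); consequently, cut elimination fails for L^⋈. -/
import Mathlib


/-- Types of the Lambek calculus with the bracelet operation `L^⋈`, built from
primitive types `P` by `\` (`ldiv A B = A \ B`), `/` (`rdiv B A = B / A`),
`·` (`mul`), reversal `^rev` (`rev`) and the bracelet operation `^⋈` (`brac`). -/
inductive Fb (P : Type) : Type
  | prim : P → Fb P
  | ldiv : Fb P → Fb P → Fb P
  | rdiv : Fb P → Fb P → Fb P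
  | mul  : Fb P → Fb P → Fb P
  | rev  : Fb P → Fb P
  | brac : Fb P → Fb P
deriving DecidableEq

/-- Derivability of sequents in the Lambek calculus with the bracelet
operation `L^⋈`.  The Boolean flag indicates whether the rule (cut) may be
used: `Db P true` is `L^⋈` (with cut), `Db P false` is its cut-free part. -/
inductive Db (P : Type) : Bool → List (Fb P) → Fb P → Prop
  | ax (c : Bool) (A : Fb P) :
      Db P c [A] A
  | axRevBrac (c : Bool) (A : Fb P) :
      Db P c [Fb.rev A] (Fb.brac A)
  | ldivL (c : Bool) (Γ Δ Pi : List (Fb P)) (A B C : Fb P) :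
      Db P c (Γ ++ B :: Δ) C → Db P c Pi A → Pi ≠ [] →
      Db P c (Γ ++ Pi ++ Fb.ldiv A B :: Δ) C
  | ldivR (c : Bool) (Pi : List (Fb P)) (A B : Fb P) :
      Db P c (A :: Pi) B → Pi ≠ [] →
      Db P c Pi (Fb.ldiv A B)
  | rdivL (c : Bool) (Γ Δ Pi : List (Fb P)) (A B C : Fb P) :
      Db P c (Γ ++ B :: Δ) C → Db P c Pi A → Pi ≠ [] →
      Db P c (Γ ++ Fb.rdiv B A :: (Pi ++ Δ)) C
  | rdivR (c : Bool) (Pi : List (Fb P)) (A B : Fb P) :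
      Db P c (Pi ++ [A]) B → Pi ≠ [] →
      Db P c Pi (Fb.rdiv B A)
  | mulL (c : Bool) (Γ Δ : List (Fb P)) (A B C : Fb P) :
      Db P c (Γ ++ A :: B :: Δ) C →
      Db P c (Γ ++ Fb.mul A B :: Δ) C
  | mulR (c : Bool) (Pi Psi : List (Fb P)) (A B : Fb P) :
      Db P c Pi A → Db P c Psi B → Pi ≠ [] → Psi ≠ [] →
      Db P c (Pi ++ Psi) (Fb.mul A B)
  | revR (c : Bool) (Γ : List (Fb P)) (A : Fb P) :
      Db P c Γ A → Γ ≠ [] →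
      Db P c ((Γ.map Fb.rev).reverse) (Fb.rev A)
  | revrevL (c : Bool) (Γ Δ : List (Fb P)) (A B : Fb P) :
      Db P c (Γ ++ A :: Δ) B →
      Db P c (Γ ++ Fb.rev (Fb.rev A) :: Δ) B
  | revrevR (c : Bool) (Pi : List (Fb P)) (A : Fb P) :
      Db P c Pi A →
      Db P c Pi (Fb.rev (Fb.rev A))
  | bracR (c : Bool) (Pi : List (Fb P)) (A : Fb P) :
      Db P c Pi A →
      Db P c Pi (Fb.brac A)
  | bracL (c : Bool) (A B : Fb P) :
      Db P c [B] (Fb.brac A) →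
      Db P c [Fb.brac B] (Fb.brac A)
  | bracC (c : Bool) (Pi Psi : List (Fb P)) (A : Fb P) :
      Db P c (Pi ++ Psi) (Fb.brac A) → Pi ≠ [] → Psi ≠ [] →
      Db P c (Psi ++ Pi) (Fb.brac A)
  | cut (Γ Δ Pi : List (Fb P)) (A B : Fb P) :
      Db P true Pi A → Db P true (Γ ++ A :: Δ) B → Pi ≠ [] →
      Db P true (Γ ++ Pi ++ Δ) B


namespace LbracAux
open Fb

variable {P : Type}

/-- All members of the list are primitive types. -/
def AP (Γ : List (Fb P)) : Prop := ∀ A ∈ Γ, ∃ t, A = Fb.prim t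

def XF (p q r : P) : Fb P :=
  Fb.mul (Fb.mul (Fb.brac (Fb.prim p)) (Fb.brac (Fb.prim q))) (Fb.brac (Fb.prim r))

/-- The invariant preserved by cut-free derivations from all-primitive antecedents. -/
def Good (p q r : P) (Γ : List (Fb P)) (C : Fb P) : Prop :=
  (∀ t : P, C = prim t → Γ = [prim t]) ∧
  (∀ t : P, C = brac (prim t) → Γ = [prim t]) ∧
  (C = mul (brac (prim p)) (brac (prim q)) → Γ = [prim p, prim q]) ∧
  (C = XF p q r → Γ = [prim p, prim q, prim r]) ∧
  (C = brac (XF p q r) →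
    Γ = [prim p, prim q, prim r] ∨ Γ = [prim q, prim r, prim p] ∨ Γ = [prim r, prim p, prim q])

lemma main (p q r : P) {c : Bool} {Γ : List (Fb P)} {C : Fb P} (h : Db P c Γ C) :
    c = false → AP Γ → Good p q r Γ C := by
  induction h with
  | ax c A =>
    intro _ hAP
    obtain ⟨t0, rfl⟩ := hAP A (by simp)
    refine ⟨?_, ?_, ?_, ?_, ?_⟩ <;> simp [XF]
  | axRevBrac c A =>
    intro _ hAP
    obtain ⟨t0, ht⟩ := hAP (Fb.rev A) (by simp)
    cases ht
  | ldivL c Γ Δ Pi A B C _ _ _ _ _ =>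
    intro _ hAP
    obtain ⟨t0, ht⟩ := hAP (Fb.ldiv A B) (by simp)
    cases ht
  | ldivR c Pi A B _ _ _ =>
    intro _ _
    refine ⟨?_, ?_, ?_, ?_, ?_⟩ <;> simp [XF]
  | rdivL c Γ Δ Pi A B C _ _ _ _ _ =>
    intro _ hAP
    obtain ⟨t0, ht⟩ := hAP (Fb.rdiv B A) (by simp)
    cases ht
  | rdivR c Pi A B _ _ _ =>
    intro _ _
    refine ⟨?_, ?_, ?_, ?_, ?_⟩ <;> simp [XF]
  | mulL c Γ Δ A B C _ _ =>
    intro _ hAP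
    obtain ⟨t0, ht⟩ := hAP (Fb.mul A B) (by simp)
    cases ht
  | mulR c Pi Psi A B _ _ hPi hPsi ih1 ih2 =>
    intro hc hAP
    have hAP1 : AP Pi := fun x hx => hAP x (by simp [hx])
    have hAP2 : AP Psi := fun x hx => hAP x (by simp [hx])
    have g1 := ih1 hc hAP1
    have g2 := ih2 hc hAP2
    refine ⟨by simp, by simp, ?_, ?_, by simp⟩
    · intro hC
      injection hC with h1 h2
      rw [g1.2.1 p h1, g2.2.1 q h2]; rfl
    · intro hC
      injection hC with h1 h2
      rw [g1.2.2.1 h1, g2.2.1 r h2]; rfl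
  | revR c Γ A _ hΓ _ =>
    intro _ hAP
    obtain ⟨x, Γ', rfl⟩ := List.exists_cons_of_ne_nil hΓ
    obtain ⟨t0, ht⟩ := hAP (Fb.rev x) (by simp)
    cases ht
  | revrevL c Γ Δ A B _ _ =>
    intro _ hAP
    obtain ⟨t0, ht⟩ := hAP (Fb.rev (Fb.rev A)) (by simp)
    cases ht
  | revrevR c Pi A _ _ =>
    intro _ _
    refine ⟨?_, ?_, ?_, ?_, ?_⟩ <;> simp [XF]
  | bracR c Pi A _ ih =>
    intro hc hAP
    have g := ih hc hAP
    refine ⟨by simp, ?_, by simp [XF], by simp [XF], ?_⟩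
    · intro t hC
      injection hC with h1
      exact g.1 t h1
    · intro hC
      injection hC with h1
      exact Or.inl (g.2.2.2.1 h1)
  | bracL c A B _ _ =>
    intro _ hAP
    obtain ⟨t0, ht⟩ := hAP (Fb.brac B) (by simp)
    cases ht
  | bracC c Pi Psi A _ hPi hPsi ih =>
    intro hc hAP
    have hAP' : AP (Pi ++ Psi) := by
      intro x hx
      exact hAP x (by simp at hx ⊢; tauto)
    have g := ih hc hAP'
    refine ⟨by simp, ?_, by simp [XF], by simp [XF], ?_⟩
    · intro t hC
      have h1 := g.2.1 t hC
      rcases Pi with _ | ⟨x, Pi⟩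
      · exact absurd rfl hPi
      rcases Psi with _ | ⟨y, Psi⟩
      · exact absurd rfl hPsi
      · have := congrArg List.length h1
        simp at this
    · intro hC
      have h1 := g.2.2.2.2 hC
      rcases Pi with _ | ⟨x, Pi⟩
      · exact absurd rfl hPi
      rcases Pi with _ | ⟨y, Pi⟩
      · -- Pi = [x]
        rcases h1 with h | h | h <;> simp at h <;>
          obtain ⟨rfl, rfl⟩ := h <;> simp
      rcases Pi with _ | ⟨z, Pi⟩
      · -- Pi = [x, y]
        rcases h1 with h | h | h <;> simp at h <;>
          obtain ⟨rfl, rfl, rfl⟩ := h <;> simp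
      · -- length ≥ 3, so Psi = [], contradiction
        exfalso
        rcases Psi with _ | ⟨w, Psi⟩
        · exact absurd rfl hPsi
        · rcases h1 with h | h | h <;>
          · have := congrArg List.length h
            simp at this
  | cut Γ Δ Pi A B _ _ _ _ _ =>
    intro hc _
    cases hc

lemma withCut (p q r : P) :
    Db P true [prim r, prim q, prim p] (brac (XF p q r)) := by
  have dp : Db P true [rev (prim p)] (brac (prim p)) := Db.axRevBrac _ _
  have dq : Db P true [rev (prim q)] (brac (prim q)) := Db.axRevBrac _ _
  have dr : Db P true [rev (prim r)] (brac (prim r)) := Db.axRevBrac _ _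
  have dpq : Db P true [rev (prim p), rev (prim q)]
      (mul (brac (prim p)) (brac (prim q))) :=
    Db.mulR _ [rev (prim p)] [rev (prim q)] _ _ dp dq (by simp) (by simp)
  have dX : Db P true [rev (prim p), rev (prim q), rev (prim r)] (XF p q r) :=
    Db.mulR _ [rev (prim p), rev (prim q)] [rev (prim r)] _ _ dpq dr
      (by simp) (by simp)
  have dXrev : Db P true
      [rev (rev (prim r)), rev (rev (prim q)), rev (rev (prim p))]
      (rev (XF p q r)) := by
    have := Db.revR true [rev (prim p), rev (prim q), rev (prim r)] (XF p q r)
      dX (by simp)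
    simpa using this
  have dax : Db P true [rev (XF p q r)] (brac (XF p q r)) := Db.axRevBrac _ _
  have d1 : Db P true
      [rev (rev (prim r)), rev (rev (prim q)), rev (rev (prim p))]
      (brac (XF p q r)) := by
    have := Db.cut [] [] _ _ _ dXrev dax (by simp)
    simpa using this
  have rr : ∀ t : P, Db P true [prim t] (rev (rev (prim t))) := fun t =>
    Db.revrevR _ _ _ (Db.ax _ _)
  have d2 : Db P true
      [prim r, rev (rev (prim q)), rev (rev (prim p))] (brac (XF p q r)) := by
    have := Db.cut [] [rev (rev (prim q)), rev (rev (prim p))] [prim r] _ _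
      (rr r) d1 (by simp)
    simpa using this
  have d3 : Db P true
      [prim r, prim q, rev (rev (prim p))] (brac (XF p q r)) := by
    have := Db.cut [prim r] [rev (rev (prim p))] [prim q] _ _
      (rr q) d2 (by simp)
    simpa using this
  have := Db.cut [prim r, prim q] [] [prim p] _ _ (rr p) d3 (by simp)
  simpa using this

end LbracAux

open Fb in
/-- For pairwise distinct primitive types `p`, `q`, `r`, the sequent
`r, q, p → ((p^⋈·q^⋈)·r^⋈)^⋈` has no cut-free derivation in `L^⋈`;
consequently, cut elimination fails for `L^⋈`. -/
theorem Lbrac_cut_not_eliminable (P : Type) (p q r : P)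
    (hpq : p ≠ q) (hqr : q ≠ r) (hpr : p ≠ r) :
    ¬ Db P false [prim r, prim q, prim p]
        (brac (mul (mul (brac (prim p)) (brac (prim q))) (brac (prim r)))) ∧
    ¬ (∀ (Γ : List (Fb P)) (B : Fb P), Db P true Γ B → Db P false Γ B) := by
  have key : ¬ Db P false [prim r, prim q, prim p]
      (brac (mul (mul (brac (prim p)) (brac (prim q))) (brac (prim r)))) := by
    intro h
    have g := LbracAux.main p q r h rfl (by intro A hA; simp at hA; rcases hA with rfl | rfl | rfl <;> exact ⟨_, rfl⟩)
    have h5 := g.2.2.2.2 rfl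
    rcases h5 with h | h | h <;> simp_all
  refine ⟨key, fun hall => key (hall _ _ (LbracAux.withCut p q r))⟩
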